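/- Let α be a type and P a list over α. Let S₁ = [t_1,…,t_k] be a segmentation of P and let S₂ be a segmentation of P that refines S₁, i.e. S₂ is the concatenation b_1 ++ ⋯ ++ b_k of nonempty lists of segments b_i such that the concatenation of the segments in b_i equals t_i for each i. Then for every annotation assignment (a_1,…,a_k) for S₁ there exists an annotation assignment a′ for S₂, using only the values a_1,…,a_k and the empty list, such that the annotated prompt J(S₂, a′) equals the annotated prompt J(S₁, (a_1,…,a_k)). (Replication construction in the proof of Theorem 3: assign a_i to the last subsegment of block b_i and the empty annotation to all other subsegments.) -/

import Mathlib

/-- A segmentation of a list `P` over `α`: a list of nonempty lists whose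
concatenation equals `P`. -/
def IsSegmentation {α : Type*} (σ : List (List α)) (P : List α) : Prop :=
  σ.flatten = P ∧ ∀ s ∈ σ, s ≠ []

/-- The annotated prompt `J(σ, a) = s₁ ++ a₁ ++ s₂ ++ a₂ ++ ⋯ ++ sₙ ++ aₙ`
obtained by interleaving the segments of `σ` with the annotations of `a`. -/
def annotatedPrompt {α : Type*} (σ a : List (List α)) : List α :=
  ((σ.zip a).map fun p => p.1 ++ p.2).flatten

lemma annotatedPrompt_append {α : Type*} (l₁ l₂ m₁ m₂ : List (List α))
    (h : l₁.length = m₁.length) :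
    annotatedPrompt (l₁ ++ l₂) (m₁ ++ m₂) =
      annotatedPrompt l₁ m₁ ++ annotatedPrompt l₂ m₂ := by
  unfold annotatedPrompt
  rw [List.zip_append h, List.map_append, List.flatten_append]

lemma annotatedPrompt_pad {α : Type*} (b : List (List α)) (ai : List α) (hb : b ≠ []) :
    annotatedPrompt b (List.replicate (b.length - 1) [] ++ [ai]) = b.flatten ++ ai := by
  induction b with
  | nil => simp at hb
  | cons x b' ih =>
    rcases b' with _ | ⟨y, b''⟩
    · simp [annotatedPrompt]
    · have h : annotatedPrompt (x :: y :: b'')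
          (List.replicate ((y :: b'').length) [] ++ [ai]) =
          annotatedPrompt [x] [[]] ++
            annotatedPrompt (y :: b'') (List.replicate ((y :: b'').length - 1) [] ++ [ai]) := by
        have : (List.replicate ((y :: b'').length) ([] : List α) ++ [ai]) =
            [[]] ++ (List.replicate ((y :: b'').length - 1) [] ++ [ai]) := by
          simp [List.replicate_succ]
        rw [this]
        exact annotatedPrompt_append [x] (y :: b'') [[]] _ rfl
      simp only [List.length_cons, Nat.add_sub_cancel] at h ⊢
      rw [h]
      have ih' := ih (by simp)
      simp only [List.length_cons, Nat.add_sub_cancel] at ih'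
      rw [ih']
      simp [annotatedPrompt]

lemma replication_aux {α : Type*} (B : List (List (List α))) (a : List (List α))
    (hBne : ∀ b ∈ B, b ≠ []) (ha : a.length = B.length) :
    ∃ a' : List (List α), a'.length = B.flatten.length ∧
      (∀ x ∈ a', x ∈ a ∨ x = ([] : List α)) ∧
      annotatedPrompt B.flatten a' = annotatedPrompt (B.map List.flatten) a := by
  induction B generalizing a with
  | nil =>
    refine ⟨[], by simp, by simp, ?_⟩
    simp [annotatedPrompt]
  | cons b B' ih =>
    rcases a with _ | ⟨ai, a'⟩
    · simp at ha
    obtain ⟨r, hrlen, hrmem, hreq⟩ := ih a' (fun x hx => hBne x (List.mem_cons_of_mem _ hx))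
      (by simpa using ha)
    refine ⟨(List.replicate (b.length - 1) [] ++ [ai]) ++ r, ?_, ?_, ?_⟩
    · have hb := hBne b List.mem_cons_self
      have hbl : 0 < b.length := List.length_pos_iff.2 hb
      simp only [List.length_append, List.length_replicate, List.length_cons,
        List.length_nil, List.flatten_cons, hrlen]
      omega
    · intro x hx
      rcases List.mem_append.1 hx with h | h
      · rcases List.mem_append.1 h with h | h
        · right; exact (List.eq_of_mem_replicate h)
        · left; simp at h; simp [h]
      · rcases hrmem x h with h | h
        · left; exact List.mem_cons_of_mem _ h
        · right; exact h
    · have hb := hBne b List.mem_cons_self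
      rw [List.flatten_cons, annotatedPrompt_append b B'.flatten _ r (by
        have := List.length_pos_iff.2 hb; simp; omega),
        annotatedPrompt_pad b ai hb, hreq]
      have : annotatedPrompt (List.map List.flatten (b :: B')) (ai :: a') =
          annotatedPrompt [b.flatten] [ai] ++ annotatedPrompt (B'.map List.flatten) a' := by
        exact annotatedPrompt_append [b.flatten] _ [ai] a' rfl
      simp [this, annotatedPrompt]

theorem replication_over_refinement {α : Type*} (P : List α)
    (S₁ : List (List α)) (hS₁ : IsSegmentation S₁ P)
    (S₂ : List (List α)) (hS₂ : IsSegmentation S₂ P)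
    (B : List (List (List α))) (hBne : ∀ b ∈ B, b ≠ [])
    (hBmap : B.map List.flatten = S₁) (hBjoin : B.flatten = S₂)
    (a : List (List α)) (ha : a.length = S₁.length) :
    ∃ a' : List (List α), a'.length = S₂.length ∧
      (∀ x ∈ a', x ∈ a ∨ x = ([] : List α)) ∧
      annotatedPrompt S₂ a' = annotatedPrompt S₁ a := by
  subst hBmap hBjoin
  exact replication_aux B a hBne (by simpa using ha)
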